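/- arXiv:2603.12241 — 2 statements merged into one kernel-verified Lean document; each statement's English description precedes it below -/
import Mathlib

section
/- Let d ≥ 1. There exists a constant C > 0 depending only on d such that for all x, y ∈ ℝ^d and all 0 < s < t: ∫_{ℝ^d} |(x−y)/t − (x−w)/s| · ψ^s(x−w) ψ^{t−s}(w−y) / ψ^t(x−y) dw ≤ C √((t−s)/(s t)). -/
open MeasureTheory Real Set

noncomputable section

abbrev Euc (d : ℕ) := EuclideanSpace ℝ (Fin d)

/-- Gaussian heat kernel `ψ^t(x)` on `ℝ^d`. -/
def heatK (d : ℕ) (t : ℝ) (x : Euc d) : ℝ :=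
  (2 * Real.pi * t) ^ (-(d : ℝ) / 2) * Real.exp (-‖x‖ ^ 2 / (2 * t))

lemma integrable_rexp_neg_mul_sq_norm (d : ℕ) {b : ℝ} (hb : 0 < b) :
    Integrable (fun v : Euc d ↦ rexp (-b * ‖v‖ ^ 2)) := by
  have h := (GaussianFourier.integrable_cexp_neg_mul_sq_norm_add
    (b := (b : ℂ)) (by simpa using hb) 0 (0 : Euc d)).re
  convert h using 2 with v
  simp [← Complex.ofReal_pow, ← Complex.ofReal_mul, ← Complex.ofReal_neg, Complex.exp_ofReal_re]

lemma quad_id {E : Type*} [NormedAddCommGroup E] [InnerProductSpace ℝ E]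
    (a b : E) {s t : ℝ} (hs : 0 < s) (hst : s < t) :
    ‖a‖ ^ 2 / (2 * s) + ‖b‖ ^ 2 / (2 * (t - s)) =
      ‖a + b‖ ^ 2 / (2 * t) +
        ‖(s / t - 1) • a + (s / t) • b‖ ^ 2 / (2 * (s * (t - s) / t)) := by
  have ht : (0 : ℝ) < t := hs.trans hst
  have hts : (0 : ℝ) < t - s := sub_pos.2 hst
  have h1 : ‖a + b‖ ^ 2 = ‖a‖ ^ 2 + 2 * (inner ℝ a b : ℝ) + ‖b‖ ^ 2 := norm_add_sq_real a b
  have h2 : ‖(s / t - 1) • a + (s / t) • b‖ ^ 2 =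
      (s / t - 1) ^ 2 * ‖a‖ ^ 2 + 2 * ((s / t - 1) * (s / t)) * (inner ℝ a b : ℝ)
        + (s / t) ^ 2 * ‖b‖ ^ 2 := by
    rw [norm_add_sq_real, norm_smul, norm_smul, real_inner_smul_left, real_inner_smul_right]
    simp only [Real.norm_eq_abs, mul_pow, sq_abs]
    ring
  rw [h1, h2]
  field_simp
  ring

lemma heatK_pos (d : ℕ) {t : ℝ} (ht : 0 < t) (x : Euc d) : 0 < heatK d t x := by
  unfold heatK
  have := Real.pi_pos
  positivity

lemma prod_id (d : ℕ) (x y w : Euc d) {s t : ℝ} (hs : 0 < s) (hst : s < t) :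
    heatK d s (x - w) * heatK d (t - s) (w - y) =
      heatK d t (x - y) * heatK d (s * (t - s) / t) (w - (x + (s / t) • (y - x))) := by
  have ht : (0 : ℝ) < t := hs.trans hst
  have hts : (0 : ℝ) < t - s := sub_pos.2 hst
  have hσ : (0 : ℝ) < s * (t - s) / t := by positivity
  have hπ := Real.pi_pos
  have hpre : (2 * π * s) ^ (-(d : ℝ) / 2) * (2 * π * (t - s)) ^ (-(d : ℝ) / 2) =
      (2 * π * t) ^ (-(d : ℝ) / 2) * (2 * π * (s * (t - s) / t)) ^ (-(d : ℝ) / 2) := by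
    rw [← Real.mul_rpow (by positivity) (by positivity),
      ← Real.mul_rpow (by positivity) (by positivity)]
    congr 1
    field_simp
  have hexp : rexp (-‖x - w‖ ^ 2 / (2 * s)) * rexp (-‖w - y‖ ^ 2 / (2 * (t - s))) =
      rexp (-‖x - y‖ ^ 2 / (2 * t)) *
        rexp (-‖w - (x + (s / t) • (y - x))‖ ^ 2 / (2 * (s * (t - s) / t))) := by
    rw [← Real.exp_add, ← Real.exp_add]
    congr 1
    have key := quad_id (x - w) (w - y) hs hst
    have e1 : x - w + (w - y) = x - y := sub_add_sub_cancel x w y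
    have e2 : (s / t - 1) • (x - w) + (s / t) • (w - y) = w - (x + (s / t) • (y - x)) := by
      match_scalars <;> (field_simp; try ring)
    rw [e1, e2] at key
    field_simp at key ⊢
    linarith
  unfold heatK
  calc (2 * π * s) ^ (-(d : ℝ) / 2) * rexp (-‖x - w‖ ^ 2 / (2 * s)) *
        ((2 * π * (t - s)) ^ (-(d : ℝ) / 2) * rexp (-‖w - y‖ ^ 2 / (2 * (t - s))))
      = ((2 * π * s) ^ (-(d : ℝ) / 2) * (2 * π * (t - s)) ^ (-(d : ℝ) / 2)) *
        (rexp (-‖x - w‖ ^ 2 / (2 * s)) * rexp (-‖w - y‖ ^ 2 / (2 * (t - s)))) := by ring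
    _ = _ := by rw [hpre, hexp]; ring

lemma ptbound (d : ℕ) {σ : ℝ} (hσ : 0 < σ) (u : Euc d) :
    ‖u‖ * heatK d σ u ≤
      (2 * π * σ) ^ (-(d : ℝ) / 2) * (2 * Real.sqrt (2 * σ)) *
        rexp (-(4 * σ)⁻¹ * ‖u‖ ^ 2) := by
  have hπ := Real.pi_pos
  unfold heatK
  have key : ∀ r : ℝ, 0 ≤ r → r * rexp (-(4 * σ)⁻¹ * r ^ 2) ≤ 2 * Real.sqrt (2 * σ) := by
    intro r hr
    have hsq : Real.sqrt (2 * σ) * Real.sqrt (2 * σ) = 2 * σ :=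
      Real.mul_self_sqrt (by positivity)
    have hsqpos : 0 < Real.sqrt (2 * σ) := Real.sqrt_pos.2 (by positivity)
    rcases le_or_gt r (2 * Real.sqrt (2 * σ)) with h | h
    · calc r * rexp (-(4 * σ)⁻¹ * r ^ 2) ≤ r * 1 := by
            gcongr
            refine Real.exp_le_one_iff.2 ?_
            have : 0 ≤ (4 * σ)⁻¹ * r ^ 2 := by positivity
            linarith
        _ ≤ 2 * Real.sqrt (2 * σ) := by linarith
    · have hrpos : 0 < r := lt_trans (by positivity) h
      have hz : (4 * σ)⁻¹ * r ^ 2 ≤ rexp ((4 * σ)⁻¹ * r ^ 2) := by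
        nlinarith [Real.add_one_le_exp ((4 * σ)⁻¹ * r ^ 2)]
      have hzpos : 0 < (4 * σ)⁻¹ * r ^ 2 := by positivity
      have hebound : rexp (-(4 * σ)⁻¹ * r ^ 2) ≤ ((4 * σ)⁻¹ * r ^ 2)⁻¹ := by
        rw [neg_mul, Real.exp_neg]
        exact inv_anti₀ hzpos hz
      have h2 : ((4 * σ)⁻¹ * r ^ 2)⁻¹ = 4 * σ / r ^ 2 := by
        field_simp
      calc r * rexp (-(4 * σ)⁻¹ * r ^ 2) ≤ r * (4 * σ / r ^ 2) := by
            rw [← h2]; gcongr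
        _ = 4 * σ / r := by field_simp
        _ ≤ 2 * Real.sqrt (2 * σ) := by
            rw [div_le_iff₀ hrpos]
            nlinarith
  have hsplit : rexp (-‖u‖ ^ 2 / (2 * σ)) =
      rexp (-(4 * σ)⁻¹ * ‖u‖ ^ 2) * rexp (-(4 * σ)⁻¹ * ‖u‖ ^ 2) := by
    rw [← Real.exp_add]
    congr 1
    field_simp
    ring
  calc ‖u‖ * ((2 * π * σ) ^ (-(d : ℝ) / 2) * rexp (-‖u‖ ^ 2 / (2 * σ)))
      = (2 * π * σ) ^ (-(d : ℝ) / 2) *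
        ((‖u‖ * rexp (-(4 * σ)⁻¹ * ‖u‖ ^ 2)) * rexp (-(4 * σ)⁻¹ * ‖u‖ ^ 2)) := by
        rw [hsplit]; ring
    _ ≤ (2 * π * σ) ^ (-(d : ℝ) / 2) *
        ((2 * Real.sqrt (2 * σ)) * rexp (-(4 * σ)⁻¹ * ‖u‖ ^ 2)) := by
        refine mul_le_mul_of_nonneg_left ?_ (by positivity)
        exact mul_le_mul_of_nonneg_right (key _ (norm_nonneg u)) (Real.exp_nonneg _)
    _ = _ := by ring

/-- first-moment bound for the Gaussian bridge density. -/
theorem statement15 (d : ℕ) (hd : 1 ≤ d) :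
    ∃ C : ℝ, 0 < C ∧
      ∀ (x y : Euc d) (s t : ℝ), 0 < s → s < t →
        (∫ w : Euc d, ‖(1 / t) • (x - y) - (1 / s) • (x - w)‖ *
            (heatK d s (x - w) * heatK d (t - s) (w - y) / heatK d t (x - y))) ≤
          C * Real.sqrt ((t - s) / (s * t)) := by
  refine ⟨2 ^ (d + 2), by positivity, ?_⟩
  intro x y s t hs hst
  have ht : (0 : ℝ) < t := hs.trans hst
  have hts : (0 : ℝ) < t - s := sub_pos.2 hst
  have hπ := Real.pi_pos
  set σ : ℝ := s * (t - s) / t with hσdef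
  have hσ : 0 < σ := by positivity
  set m : Euc d := x + (s / t) • (y - x) with hm
  have hKt := heatK_pos d ht (x - y)
  have hpt : ∀ w : Euc d,
      ‖(1 / t) • (x - y) - (1 / s) • (x - w)‖ *
        (heatK d s (x - w) * heatK d (t - s) (w - y) / heatK d t (x - y)) =
      (1 / s) * (‖w - m‖ * heatK d σ (w - m)) := by
    intro w
    have e3 : (1 / t) • (x - y) - (1 / s) • (x - w) = (1 / s) • (w - m) := by
      rw [hm]; match_scalars <;> (field_simp; try ring)
    rw [prod_id d x y w hs hst, e3, norm_smul, ← hm, ← hσdef,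
      mul_div_cancel_left₀ _ (ne_of_gt hKt)]
    rw [Real.norm_eq_abs, abs_of_pos (by positivity : (0 : ℝ) < 1 / s)]
    ring
  have hq : (0 : ℝ) ≤ (t - s) / (s * t) := by positivity
  have hs2 : Real.sqrt (2 * σ) / s = Real.sqrt 2 * Real.sqrt ((t - s) / (s * t)) := by
    have h1 : 2 * σ = 2 * ((t - s) / (s * t)) * s ^ 2 := by
      rw [hσdef]; field_simp
    rw [h1, Real.sqrt_mul (by positivity) (s ^ 2), Real.sqrt_sq hs.le,
      mul_div_assoc, div_self (ne_of_gt hs), mul_one,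
      Real.sqrt_mul (by norm_num) ((t - s) / (s * t))]
  have hR : (2 * π * σ) ^ (-(d : ℝ) / 2) * (π / (4 * σ)⁻¹) ^ ((d : ℝ) / 2)
      = 2 ^ ((d : ℝ) / 2) := by
    have h2πσ : (0 : ℝ) ≤ 2 * π * σ := by positivity
    have h4 : π / (4 * σ)⁻¹ = (2 * π * σ) * 2 := by field_simp; ring
    rw [h4, neg_div, Real.rpow_neg h2πσ,
      Real.mul_rpow h2πσ (by norm_num : (0:ℝ) ≤ 2), ← mul_assoc,
      inv_mul_cancel₀ (ne_of_gt (Real.rpow_pos_of_pos (by positivity : (0:ℝ) < 2 * π * σ) _)),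
      one_mul]
  calc (∫ w : Euc d, ‖(1 / t) • (x - y) - (1 / s) • (x - w)‖ *
            (heatK d s (x - w) * heatK d (t - s) (w - y) / heatK d t (x - y)))
      = ∫ w : Euc d, (1 / s) * (‖w - m‖ * heatK d σ (w - m)) := by
        exact integral_congr_ae (Filter.Eventually.of_forall hpt)
    _ = ∫ u : Euc d, (1 / s) * (‖u‖ * heatK d σ u) :=
        integral_sub_right_eq_self (fun u : Euc d => (1 / s) * (‖u‖ * heatK d σ u)) m
    _ ≤ ∫ u : Euc d, (1 / s) * ((2 * π * σ) ^ (-(d : ℝ) / 2) * (2 * Real.sqrt (2 * σ)) *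
          rexp (-(4 * σ)⁻¹ * ‖u‖ ^ 2)) := by
        apply integral_mono_of_nonneg
        · filter_upwards with u
          exact mul_nonneg (by positivity)
            (mul_nonneg (norm_nonneg _) (heatK_pos d hσ _).le)
        · exact ((integrable_rexp_neg_mul_sq_norm d
            (by positivity : (0:ℝ) < (4 * σ)⁻¹)).const_mul _).const_mul _
        · filter_upwards with u
          exact mul_le_mul_of_nonneg_left (ptbound d hσ u) (by positivity)
    _ = (1 / s) * ((2 * π * σ) ^ (-(d : ℝ) / 2) * (2 * Real.sqrt (2 * σ)) *
          (π / (4 * σ)⁻¹) ^ ((d : ℝ) / 2)) := by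
        rw [integral_const_mul, integral_const_mul,
          GaussianFourier.integral_rexp_neg_mul_sq_norm (by positivity : (0:ℝ) < (4 * σ)⁻¹)]
        simp [finrank_euclideanSpace_fin]
    _ = ((2 * π * σ) ^ (-(d : ℝ) / 2) * (π / (4 * σ)⁻¹) ^ ((d : ℝ) / 2)) *
          (2 * (Real.sqrt (2 * σ) / s)) := by ring
    _ = 2 ^ ((d : ℝ) / 2) * (2 * (Real.sqrt 2 * Real.sqrt ((t - s) / (s * t)))) := by
        rw [hR, hs2]
    _ ≤ 2 ^ (d + 2) * Real.sqrt ((t - s) / (s * t)) := by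
        have h1 : (2 : ℝ) ^ ((d : ℝ) / 2) ≤ (2 : ℝ) ^ (d : ℕ) := by
          rw [← Real.rpow_natCast 2 d]
          exact Real.rpow_le_rpow_of_exponent_le one_le_two
            (by nlinarith [Nat.cast_nonneg (α := ℝ) d])
        have h3 : Real.sqrt 2 ≤ 2 := by
          nlinarith [Real.sq_sqrt (by norm_num : (0:ℝ) ≤ 2), Real.sqrt_nonneg 2]
        calc (2:ℝ) ^ ((d : ℝ) / 2) * (2 * (Real.sqrt 2 * Real.sqrt ((t - s) / (s * t))))
            = ((2:ℝ) ^ ((d : ℝ) / 2) * 2 * Real.sqrt 2) * Real.sqrt ((t - s) / (s * t)) := by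
              ring
          _ ≤ ((2:ℝ) ^ (d : ℕ) * 2 * 2) * Real.sqrt ((t - s) / (s * t)) := by
              gcongr
          _ = 2 ^ (d + 2) * Real.sqrt ((t - s) / (s * t)) := by
              rw [pow_add]; ring

end
end

section
/- For every s > 0 there exists a constant C_s > 0 such that for all h > 0, all ν > 0 and all δ ≥ 2ν: 0 ≤ ∫_δ^∞ ( e^{-⌊t⌋_ν h} − e^{-t h} ) dt ≤ C_s ν h^{-s} (δ − ν)^{-s}, where ⌊t⌋_ν := ν ⌊t/ν⌋ denotes the largest integer multiple of ν not exceeding t. -/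
open MeasureTheory Real Set Filter Topology

lemma myIntExp {b : ℝ} (hb : 0 < b) (a : ℝ) :
    ∫ x in Ioi a, Real.exp (-b * x) = Real.exp (-b * a) / b := by
  have hd : ∀ x ∈ Ici a, HasDerivAt (fun x => -Real.exp (-b*x)/b) (Real.exp (-b*x)) x := by
    intro x _
    have h1 : HasDerivAt (fun x : ℝ => -b * x) (-b) x := by
      simpa using (hasDerivAt_id x).const_mul (-b)
    have h2 : HasDerivAt (fun x : ℝ => Real.exp (-b*x)) (Real.exp (-b*x) * (-b)) x :=
      (Real.hasDerivAt_exp _).comp x h1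
    have h3 := (h2.neg).div_const b
    exact h3.congr_deriv (by rw [div_eq_iff hb.ne']; ring)
  have ht : Tendsto (fun x => -Real.exp (-b*x)/b) atTop (𝓝 0) := by
    have : Tendsto (fun x : ℝ => Real.exp (-b*x)) atTop (𝓝 0) :=
      Real.tendsto_exp_atBot.comp ((tendsto_id (α := ℝ)).const_mul_atTop_of_neg (neg_lt_zero.mpr hb))
    simpa using (this.neg).div_const b
  have := integral_Ioi_of_hasDerivAt_of_tendsto' hd (exp_neg_integrableOn_Ioi a hb) ht
  rw [this]; field_simp; ring

lemma myExpBound {s : ℝ} (hs : 0 < s) {x : ℝ} (hx : 0 < x) :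
    Real.exp (-x) ≤ s ^ s * x ^ (-s) := by
  have h1 : x ^ s ≤ s ^ s * Real.exp x := by
    have h2 : x / s ≤ Real.exp (x / s) := by
      have := Real.add_one_le_exp (x / s)
      linarith
    have h3 : (x / s) ^ s ≤ (Real.exp (x / s)) ^ s :=
      Real.rpow_le_rpow (by positivity) h2 hs.le
    have h4 : (Real.exp (x / s)) ^ s = Real.exp x := by
      rw [← Real.exp_mul]; rw [div_mul_cancel₀ _ hs.ne']
    calc x ^ s = (s * (x / s)) ^ s := by rw [mul_div_cancel₀ _ hs.ne']
      _ = s ^ s * (x / s) ^ s := Real.mul_rpow hs.le (by positivity)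
      _ ≤ s ^ s * Real.exp x := by
          rw [← h4]; exact mul_le_mul_of_nonneg_left h3 (by positivity)
  have hxs : (0:ℝ) < x ^ s := Real.rpow_pos_of_pos hx s
  rw [Real.exp_neg, Real.rpow_neg hx.le, ← div_eq_mul_inv, le_div_iff₀ hxs,
    inv_mul_le_iff₀ (Real.exp_pos x)]
  linarith

/-- Riemann-sum error estimate for `e^{-th}`, with `⌊t⌋_ν := ν⌊t/ν⌋`. -/
theorem statement19 (s : ℝ) (hs : 0 < s) :
    ∃ C : ℝ, 0 < C ∧
      ∀ h ν δ : ℝ, 0 < h → 0 < ν → 2 * ν ≤ δ →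
        0 ≤ (∫ t in Set.Ioi δ,
              (Real.exp (-(ν * (⌊t / ν⌋ : ℝ)) * h) - Real.exp (-t * h))) ∧
        (∫ t in Set.Ioi δ,
            (Real.exp (-(ν * (⌊t / ν⌋ : ℝ)) * h) - Real.exp (-t * h))) ≤
          C * ν * h ^ (-s) * (δ - ν) ^ (-s) := by
  refine ⟨s ^ s, Real.rpow_pos_of_pos hs s, fun h ν δ hh hν hδ => ?_⟩
  set f : ℝ → ℝ := fun t => Real.exp (-(ν * (⌊t / ν⌋ : ℝ)) * h) - Real.exp (-t * h) with hf
  -- pointwise facts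
  have hfl : ∀ t : ℝ, ν * (⌊t / ν⌋ : ℝ) ≤ t := by
    intro t
    have := Int.floor_le (t / ν)
    calc ν * (⌊t / ν⌋ : ℝ) ≤ ν * (t / ν) := by nlinarith
      _ = t := by field_simp
  have hfl2 : ∀ t : ℝ, t - ν ≤ ν * (⌊t / ν⌋ : ℝ) := by
    intro t
    have := Int.lt_floor_add_one (t / ν)
    have h2 : t / ν < (⌊t / ν⌋ : ℝ) + 1 := this
    have h3 := mul_lt_mul_of_pos_left h2 hν
    have h4 : ν * (t / ν) = t := by field_simp
    nlinarith [h3, h4]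
  have hnonneg : ∀ t : ℝ, 0 ≤ f t := by
    intro t
    have : Real.exp (-t * h) ≤ Real.exp (-(ν * (⌊t / ν⌋ : ℝ)) * h) := by
      apply Real.exp_le_exp.mpr
      nlinarith [hfl t]
    simp only [hf]; linarith
  have hbound : ∀ t : ℝ, f t ≤ ν * h * Real.exp (ν * h) * Real.exp (-h * t) := by
    intro t
    have hA : Real.exp (-(ν * (⌊t / ν⌋ : ℝ)) * h) ≤ Real.exp (ν * h) * Real.exp (-h * t) := by
      rw [← Real.exp_add]
      apply Real.exp_le_exp.mpr
      nlinarith [hfl2 t]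
    have hC : -(ν * h) + 1 ≤ Real.exp (-(ν * h)) := Real.add_one_le_exp _
    have hD : Real.exp (-(ν * h)) * Real.exp (ν * h) = 1 := by
      rw [← Real.exp_add]; simp
    have hE : (0:ℝ) < Real.exp (-h * t) := Real.exp_pos _
    have hF : (0:ℝ) < Real.exp (ν * h) := Real.exp_pos _
    have htt : Real.exp (-t * h) = Real.exp (-h * t) := by ring_nf
    simp only [hf]
    rw [htt]
    nlinarith [mul_le_mul_of_nonneg_right hC hF.le]
  -- measurability
  have hmeas : Measurable f := by
    have h1 : Measurable fun t : ℝ => ((⌊t / ν⌋ : ℤ) : ℝ) :=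
      (measurable_from_top : Measurable fun z : ℤ => (z : ℝ)).comp (measurable_id.div_const ν).floor
    exact (Real.measurable_exp.comp (((h1.const_mul ν).neg.mul_const h))).sub
      (Real.measurable_exp.comp ((measurable_id.neg).mul_const h))
  -- integrability
  have hgint : IntegrableOn (fun t => ν * h * Real.exp (ν * h) * Real.exp (-h * t)) (Ioi δ) :=
    (exp_neg_integrableOn_Ioi δ hh).const_mul _
  have hint : IntegrableOn f (Ioi δ) := by
    apply Integrable.mono' hgint hmeas.aestronglyMeasurable
    filter_upwards with t
    rw [Real.norm_eq_abs, abs_of_nonneg (hnonneg t)]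
    exact hbound t
  constructor
  · exact setIntegral_nonneg measurableSet_Ioi fun t _ => hnonneg t
  · have hδν : 0 < δ - ν := by nlinarith
    have step1 : (∫ t in Ioi δ, f t) ≤
        ∫ t in Ioi δ, ν * h * Real.exp (ν * h) * Real.exp (-h * t) :=
      setIntegral_mono_on hint hgint measurableSet_Ioi fun t _ => hbound t
    have step2 : (∫ t in Ioi δ, ν * h * Real.exp (ν * h) * Real.exp (-h * t)) =
        ν * Real.exp (-((δ - ν) * h)) := by
      rw [integral_const_mul, myIntExp hh δ,
        show -((δ - ν) * h) = ν * h + -h * δ by ring, Real.exp_add]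
      field_simp
    have step3 : ν * Real.exp (-((δ - ν) * h)) ≤ ν * (s ^ s * ((δ - ν) * h) ^ (-s)) :=
      mul_le_mul_of_nonneg_left (myExpBound hs (by positivity)) hν.le
    have step4 : ν * (s ^ s * ((δ - ν) * h) ^ (-s)) = s ^ s * ν * h ^ (-s) * (δ - ν) ^ (-s) := by
      rw [Real.mul_rpow hδν.le hh.le]; ring
    calc (∫ t in Ioi δ, f t) ≤ _ := step1
      _ = ν * Real.exp (-((δ - ν) * h)) := step2
      _ ≤ ν * (s ^ s * ((δ - ν) * h) ^ (-s)) := step3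
      _ = s ^ s * ν * h ^ (-s) * (δ - ν) ^ (-s) := step4
end
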